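/- For every s ∈ ℝ^{2n} and every ħ > 0, the Fourier transform of the Gaussian associated with a compatible inner product reproduces the same Gaussian: ∫_{ℝ^{2n}} e^{−g(u,u)/ħ} e^{(2i/ħ) θ(u,s)} du = ((πħ)ⁿ/√(det G)) · e^{−g(s,s)/ħ}, where the integral is a (complex-valued) Lebesgue integral and det G is the determinant of the matrix G of g in the standard basis. -/

import Mathlib

open MeasureTheory Topology Filter

noncomputable section

/-- The standard symplectic form on `ℝ^{2n}`:
`θ(u,v) = Σ_{i=1}^n (u_i v_{n+i} − u_{n+i} v_i)`. -/
def stdSymp (n : ℕ) (u v : Fin (2 * n) → ℝ) : ℝ :=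
  ∑ i : Fin n,
    (u ⟨i.1, by have := i.isLt; omega⟩ * v ⟨n + i.1, by have := i.isLt; omega⟩ -
      u ⟨n + i.1, by have := i.isLt; omega⟩ * v ⟨i.1, by have := i.isLt; omega⟩)

/-- The Gram matrix of `g(u,v) = θ(u, Jv)` in the standard basis. -/
def gram (n : ℕ) (J : (Fin (2 * n) → ℝ) →ₗ[ℝ] (Fin (2 * n) → ℝ)) :
    Matrix (Fin (2 * n)) (Fin (2 * n)) ℝ :=
  Matrix.of fun i j => stdSymp n (Pi.single i 1) (J (Pi.single j 1))

open Matrix in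
lemma dot_swap {m : ℕ} (M : Matrix (Fin m) (Fin m) ℝ) (x y : Fin m → ℝ) :
    (M *ᵥ x) ⬝ᵥ y = x ⬝ᵥ (Mᵀ *ᵥ y) := by
  rw [Matrix.dotProduct_mulVec, Matrix.vecMul_transpose]

/-- `stdSymp` as a bilinear map. -/
def sympL (n : ℕ) : (Fin (2 * n) → ℝ) →ₗ[ℝ] (Fin (2 * n) → ℝ) →ₗ[ℝ] ℝ :=
  LinearMap.mk₂ ℝ (stdSymp n)
    (fun u u' v => by
      unfold stdSymp
      rw [← Finset.sum_add_distrib]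
      exact Finset.sum_congr rfl fun i _ => by simp only [Pi.add_apply]; ring)
    (fun c u v => by
      unfold stdSymp
      rw [Finset.smul_sum]
      exact Finset.sum_congr rfl fun i _ => by
        simp only [Pi.smul_apply, smul_eq_mul]; ring)
    (fun u v v' => by
      unfold stdSymp
      rw [← Finset.sum_add_distrib]
      exact Finset.sum_congr rfl fun i _ => by simp only [Pi.add_apply]; ring)
    (fun c u v => by
      unfold stdSymp
      rw [Finset.smul_sum]
      exact Finset.sum_congr rfl fun i _ => by
        simp only [Pi.smul_apply, smul_eq_mul]; ring)

open Matrix in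
lemma stdSymp_rep (n : ℕ) (J : (Fin (2 * n) → ℝ) →ₗ[ℝ] (Fin (2 * n) → ℝ))
    (u v : Fin (2 * n) → ℝ) :
    stdSymp n u (J v) = u ⬝ᵥ ((gram n J) *ᵥ v) := by
  have h : LinearMap.toMatrix₂' ℝ ((sympL n).compl₂ J) = gram n J := by
    ext i j
    simp [LinearMap.toMatrix₂'_apply, LinearMap.compl₂_apply, sympL, _root_.gram,
      LinearMap.mk₂_apply]
  calc stdSymp n u (J v) = ((sympL n).compl₂ J) u v := rfl
    _ = Matrix.toLinearMap₂' ℝ (LinearMap.toMatrix₂' ℝ ((sympL n).compl₂ J)) u v := by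
        rw [Matrix.toLinearMap₂', LinearEquiv.symm_apply_apply]
    _ = u ⬝ᵥ ((gram n J) *ᵥ v) := by rw [h, Matrix.toLinearMap₂'_apply']

lemma stdSymp_neg_right (n : ℕ) (u y : Fin (2 * n) → ℝ) :
    stdSymp n u (-y) = -stdSymp n u y :=
  map_neg ((sympL n) u) y

open Matrix

/-- Fourier reproducing identity for the Gaussian of a compatible inner product:
`∫ e^{−g(u,u)/hb} e^{(2i/hb)θ(u,s)} du = ((π hb)ⁿ/√(det G)) e^{−g(s,s)/hb}`. -/
theorem statement12
    (n : ℕ) (J : (Fin (2 * n) → ℝ) →ₗ[ℝ] (Fin (2 * n) → ℝ))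
    (hJ : ∀ u, J (J u) = -u)
    (hcompat : ∀ u v, stdSymp n (J u) (J v) = stdSymp n u v)
    (hsymm : ∀ u v, stdSymp n u (J v) = stdSymp n v (J u))
    (hpos : ∀ u, u ≠ 0 → 0 < stdSymp n u (J u))
    (s : Fin (2 * n) → ℝ) (hb : ℝ) (hhb : 0 < hb) :
    ∫ u : Fin (2 * n) → ℝ,
        ((Real.exp (-(stdSymp n u (J u)) / hb) : ℝ) : ℂ) *
          Complex.exp ((2 * Complex.I / hb) * (stdSymp n u s : ℂ)) =
      (((Real.pi * hb) ^ n / Real.sqrt (gram n J).det : ℝ) : ℂ) *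
        ((Real.exp (-(stdSymp n s (J s)) / hb) : ℝ) : ℂ) := by
  have hbne : hb ≠ 0 := ne_of_gt hhb
  set G := gram n J with hGdef
  have hrep : ∀ u v, stdSymp n u (J v) = u ⬝ᵥ (G *ᵥ v) := stdSymp_rep n J
  -- G is symmetric positive definite
  have hGh : G.IsHermitian := by
    show Gᴴ = G
    ext i j
    simp only [Matrix.conjTranspose_apply, star_trivial, hGdef, _root_.gram, Matrix.of_apply]
    exact (hsymm _ _).symm
  have hGpd : G.PosDef := by
    refine Matrix.PosDef.of_dotProduct_mulVec_pos hGh fun x hx => ?_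
    have h0 : star x = x := funext fun i => star_trivial _
    rw [h0, ← hrep]
    exact hpos x hx
  have hdetG : 0 < G.det := hGpd.det_pos
  set A := (open scoped MatrixOrder in CFC.sqrt G) with hAdef
  have hAA : A * A = G := by
    open scoped MatrixOrder in exact CFC.sqrt_mul_sqrt_self G hGpd.posSemidef.nonneg
  have hAt : Aᵀ = A := by
    have h : Aᴴ = A := by
      open scoped MatrixOrder in exact (Matrix.nonneg_iff_posSemidef.mp (CFC.sqrt_nonneg G)).isHermitian
    ext i j
    have := congrFun (congrFun h i) j
    simpa [Matrix.conjTranspose_apply] using this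
  have hdetA2 : A.det * A.det = G.det := by rw [← Matrix.det_mul, hAA]
  have hdetA0 : A.det ≠ 0 := by
    intro h; rw [h, zero_mul] at hdetA2; exact hdetG.ne hdetA2
  have habsA : 0 < |A.det| := abs_pos.mpr hdetA0
  have hsqrtG : Real.sqrt G.det = |A.det| := by
    rw [← hdetA2, ← sq, Real.sqrt_sq_eq_abs]
  set B := A⁻¹ with hBdef
  have hUnit : IsUnit A.det := isUnit_iff_ne_zero.mpr hdetA0
  have hBA : B * A = 1 := A.nonsing_inv_mul hUnit
  have hAB : A * B = 1 := A.mul_nonsing_inv hUnit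
  have hBt : Bᵀ = B := by rw [hBdef, Matrix.transpose_nonsing_inv, hAt]
  have hBG : B * G = A := by rw [← hAA, ← Matrix.mul_assoc, hBA, Matrix.one_mul]
  have hBGB : B * G * B = 1 := by rw [hBG, hAB]
  have hdetB : B.det = A.det⁻¹ := by
    rw [hBdef, A.det_nonsing_inv, Ring.inverse_eq_inv']
  have hdetB0 : B.det ≠ 0 := by rw [hdetB]; exact inv_ne_zero hdetA0
  set w := J s with hwdef
  set F : (Fin (2 * n) → ℝ) → ℂ := fun u =>
    ((Real.exp (-(stdSymp n u (J u)) / hb) : ℝ) : ℂ) *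
      Complex.exp ((2 * Complex.I / hb) * (stdSymp n u s : ℂ)) with hFdef
  -- change of variables u = B x
  haveI hInv : Invertible B := B.invertibleOfIsUnitDet (isUnit_iff_ne_zero.mpr hdetB0)
  set e : (Fin (2 * n) → ℝ) ≃ₗ[ℝ] (Fin (2 * n) → ℝ) := B.toLinearEquiv' hInv with hedef
  set me := e.toContinuousLinearEquiv.toHomeomorph.toMeasurableEquiv with hmedef
  have hmecoe : (me : (Fin (2 * n) → ℝ) → (Fin (2 * n) → ℝ)) = fun x => B *ᵥ x := rfl
  have hmap : Measure.map (⇑me) volume = ENNReal.ofReal |B.det⁻¹| • volume := by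
    rw [hmecoe]
    have : (fun x : Fin (2 * n) → ℝ => B *ᵥ x) = ⇑(Matrix.toLin' B) := by
      funext x; simp [Matrix.toLin'_apply]
    rw [this]
    rw [Real.map_linearMap_volume_pi_eq_smul_volume_pi, LinearMap.det_toLin']
    rw [LinearMap.det_toLin']
    exact hdetB0
  have hCoV : ∫ u, F u = |A.det|⁻¹ • ∫ x, F (B *ᵥ x) := by
    have h1 : ∫ y, F y ∂(Measure.map (⇑me) volume) = ∫ x, F (me x) := by
      exact MeasureTheory.integral_map_equiv me F
    rw [hmap, integral_smul_measure, ENNReal.toReal_ofReal (abs_nonneg _)] at h1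
    have habs : |B.det⁻¹| = |A.det| := by rw [hdetB, inv_inv]
    rw [habs] at h1
    rw [hmecoe] at h1
    rw [← h1, smul_smul, inv_mul_cancel₀ (ne_of_gt habsA), one_smul]
  -- pointwise computations
  have hq : ∀ x : Fin (2 * n) → ℝ, stdSymp n (B *ᵥ x) (J (B *ᵥ x)) = ∑ i, x i ^ 2 := by
    intro x
    rw [hrep, dot_swap, hBt, Matrix.mulVec_mulVec, Matrix.mulVec_mulVec,
      hBGB, Matrix.one_mulVec]
    simp [dotProduct, sq]
  have hlin : ∀ x : Fin (2 * n) → ℝ, stdSymp n (B *ᵥ x) s = -(x ⬝ᵥ (A *ᵥ w)) := by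
    intro x
    calc stdSymp n (B *ᵥ x) s = stdSymp n (B *ᵥ x) (-(J w)) := by
          rw [hwdef, hJ s, neg_neg]
      _ = -stdSymp n (B *ᵥ x) (J w) := stdSymp_neg_right n _ _
      _ = -((B *ᵥ x) ⬝ᵥ (G *ᵥ w)) := by rw [hrep]
      _ = -(x ⬝ᵥ (A *ᵥ w)) := by rw [dot_swap, hBt, Matrix.mulVec_mulVec, hBG]
  have hnorm : (A *ᵥ w) ⬝ᵥ (A *ᵥ w) = stdSymp n s (J s) := by
    rw [dot_swap, hAt, Matrix.mulVec_mulVec, hAA, ← hrep, hwdef]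
    exact hcompat s (J s)
  set b : ℂ := ((hb⁻¹ : ℝ) : ℂ) with hbdefC
  set c : Fin (2 * n) → ℂ := fun i => -(2 * Complex.I / hb) * (((A *ᵥ w) i : ℝ) : ℂ) with hcdef
  have hbre : 0 < b.re := by
    rw [hbdefC, Complex.ofReal_re]
    exact inv_pos.mpr hhb
  have hptwise : ∀ x : Fin (2 * n) → ℝ,
      F (B *ᵥ x) = Complex.exp (-b * ∑ i, ((x i : ℝ) : ℂ) ^ 2 + ∑ i, c i * ((x i : ℝ) : ℂ)) := by
    intro x
    simp only [hFdef]
    rw [hq x, hlin x, Complex.ofReal_exp, ← Complex.exp_add]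
    congr 1
    have h1 : ((2 : ℂ) * Complex.I / hb) * ((-(x ⬝ᵥ (A *ᵥ w)) : ℝ) : ℂ)
        = ∑ i, c i * ((x i : ℝ) : ℂ) := by
      simp only [hcdef, dotProduct]
      push_cast
      rw [mul_neg, Finset.mul_sum, ← Finset.sum_neg_distrib]
      exact Finset.sum_congr rfl fun i _ => by ring
    have h2 : ((-(∑ i, x i ^ 2) / hb : ℝ) : ℂ) = -b * ∑ i, ((x i : ℝ) : ℂ) ^ 2 := by
      rw [hbdefC]
      push_cast
      ring
    rw [h1, h2]
  have hIeq : ∫ x, F (B *ᵥ x)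
      = (↑Real.pi / b) ^ ((Fintype.card (Fin (2 * n)) : ℂ) / 2)
        * Complex.exp ((∑ i, c i ^ 2) / (4 * b)) := by
    calc ∫ x, F (B *ᵥ x)
        = ∫ x : Fin (2 * n) → ℝ,
            Complex.exp (-b * ∑ i, ((x i : ℝ) : ℂ) ^ 2 + ∑ i, c i * ((x i : ℝ) : ℂ)) := by
          exact integral_congr_ae (Filter.Eventually.of_forall fun x => hptwise x)
      _ = _ := GaussianFourier.integral_cexp_neg_mul_sum_add hbre c
  have hpow : (↑Real.pi / b) ^ ((Fintype.card (Fin (2 * n)) : ℂ) / 2)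
      = ((((Real.pi * hb) ^ n : ℝ)) : ℂ) := by
    have hcard : ((Fintype.card (Fin (2 * n)) : ℂ)) / 2 = (n : ℂ) := by
      rw [Fintype.card_fin]
      push_cast
      ring
    have hbase : (↑Real.pi / b) = ((Real.pi * hb : ℝ) : ℂ) := by
      rw [hbdefC]
      push_cast
      field_simp
    rw [hcard, hbase, Complex.cpow_natCast]
    push_cast
    ring
  have hsum2 : (∑ i, c i ^ 2) / (4 * b) = ((-(stdSymp n s (J s)) / hb : ℝ) : ℂ) := by
    have h1 : ∑ i, c i ^ 2
        = (-(2 * Complex.I / hb)) ^ 2 * (((A *ᵥ w) ⬝ᵥ (A *ᵥ w) : ℝ) : ℂ) := by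
      simp only [hcdef, mul_pow, dotProduct]
      push_cast
      rw [Finset.mul_sum]
      exact Finset.sum_congr rfl fun i _ => by ring
    have hI2 : (-(2 * Complex.I / hb)) ^ 2 = -4 / ((hb : ℝ) : ℂ) ^ 2 := by
      field_simp
      rw [Complex.I_sq]
      ring
    rw [h1, hnorm, hI2, hbdefC]
    have hbC : ((hb : ℝ) : ℂ) ≠ 0 := by
      simpa using hbne
    push_cast
    field_simp
  rw [hCoV, hIeq, hpow, hsum2, ← Complex.ofReal_exp, hsqrtG, Complex.real_smul]
  have hA0 : ((|A.det| : ℝ) : ℂ) ≠ 0 := by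
    simpa using ne_of_gt habsA
  push_cast
  field_simp
  rfl
end
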